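/- For every natural number n, a(n) ≤ ∑_{λ ∈ Λ₂(n)} (ℓ(λ)! / ∏_{i=1}^{λ₁} k(λ,i)!) · X(ℓ(λ)), where the sum is over all partitions λ of n all of whose parts are at least 2, a(n) is the number of isomorphism classes of Anosov graphs on n vertices, and X(t) is the number of equivalence classes of t×t symmetric 0–1 matrices with pairwise distinct rows under simultaneous permutation of rows and columns. -/

import Mathlib

/-- x ∼ y iff the open neighborhoods coincide or the closed neighborhoods coincide. -/
def simRel {V : Type*} (G : SimpleGraph V) (x y : V) : Prop :=
  G.neighborSet x = G.neighborSet y ∨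
    insert x (G.neighborSet x) = insert y (G.neighborSet y)

/-- A connected simple graph is Anosov if every ∼-class has at least two vertices and every
∼-class with exactly two vertices is edgeless. -/
def IsAnosov {V : Type*} (G : SimpleGraph V) : Prop :=
  G.Connected ∧
    (∀ x : V, 2 ≤ {y | simRel G x y}.ncard) ∧
    (∀ x y : V, {z | simRel G x z}.ncard = 2 → simRel G x y → ¬ G.Adj x y)

/-- Graphs on `Fin n` satisfying a property `P`, up to isomorphism. -/
def graphClassSetoid (n : ℕ) (P : SimpleGraph (Fin n) → Prop) :
    Setoid {G : SimpleGraph (Fin n) // P G} where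
  r G H := Nonempty (G.1 ≃g H.1)
  iseqv := ⟨fun _ => ⟨RelIso.refl _⟩, fun ⟨e⟩ => ⟨e.symm⟩, fun ⟨e⟩ ⟨f⟩ => ⟨e.trans f⟩⟩

/-- `a n`: the number of isomorphism classes of Anosov graphs on `n` vertices. -/
noncomputable def anosovCount (n : ℕ) : ℕ :=
  Nat.card (Quotient (graphClassSetoid n IsAnosov))

/-- `t × t` symmetric 0–1 matrices with pairwise distinct rows. -/
def SymDistinctMat (t : ℕ) : Type :=
  {A : Matrix (Fin t) (Fin t) (Fin 2) // A.IsSymm ∧ ∀ i j : Fin t, i ≠ j → ∃ n, A i n ≠ A j n}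

/-- Simultaneous permutation of rows and columns. -/
def matPermSetoid (t : ℕ) : Setoid (SymDistinctMat t) where
  r A B := ∃ σ : Equiv.Perm (Fin t), ∀ i j, B.1 i j = A.1 (σ i) (σ j)
  iseqv := by
    refine ⟨fun A => ⟨Equiv.refl _, fun i j => rfl⟩, ?_, ?_⟩
    · rintro A B ⟨σ, h⟩
      exact ⟨σ.symm, fun i j => by rw [h]; simp⟩
    · rintro A B C ⟨σ, h⟩ ⟨τ, h'⟩
      exact ⟨τ.trans σ, fun i j => by rw [h', h]; rfl⟩

/-- `X t`: the number of `t × t` symmetric 0–1 matrices with pairwise distinct rows, up to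
simultaneous permutation of rows and columns. -/
noncomputable def symDistinctCount (t : ℕ) : ℕ := Nat.card (Quotient (matPermSetoid t))


namespace AnosovAux

variable {V : Type*} (G : SimpleGraph V)

variable {G}

lemma open_nonadj {x y : V} (h : G.neighborSet x = G.neighborSet y) : ¬ G.Adj x y := by
  intro hadj
  have hx : x ∈ G.neighborSet y := hadj.symm
  rw [← h] at hx
  exact G.irrefl hx

lemma closed_adj {x y : V}
    (h : insert x (G.neighborSet x) = insert y (G.neighborSet y)) (hxy : x ≠ y) : G.Adj x y := by
  have hx : x ∈ insert y (G.neighborSet y) := h ▸ Set.mem_insert x _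
  rcases hx with hx | hx
  · exact absurd hx hxy
  · exact hx.symm

lemma mixed_false {x y z : V} (hxy : x ≠ y) (hxz : x ≠ z)
    (ho : G.neighborSet x = G.neighborSet y)
    (hc : insert x (G.neighborSet x) = insert z (G.neighborSet z)) : False := by
  have hz : z ∈ insert x (G.neighborSet x) := hc ▸ Set.mem_insert z _
  rcases hz with hz | hz
  · exact hxz hz.symm
  · -- z ∈ N x = N y
    rw [ho] at hz
    have hyz : G.Adj y z := hz
    have hy : y ∈ insert x (G.neighborSet x) := by
      rw [hc]; exact Set.mem_insert_iff.2 (Or.inr hyz.symm)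
    rcases hy with hy | hy
    · exact hxy hy.symm
    · have : G.Adj x y := hy
      have : y ∈ G.neighborSet y := by rw [← ho]; exact this
      exact G.irrefl this

lemma simRel_trans {x y z : V} (h1 : simRel G x y) (h2 : simRel G y z) : simRel G x z := by
  rcases h1 with h1 | h1
  · rcases h2 with h2 | h2
    · exact Or.inl (h1.trans h2)
    · rcases eq_or_ne x y with rfl | hxy
      · exact Or.inr h2
      · rcases eq_or_ne y z with rfl | hyz
        · exact Or.inl h1
        · exact (mixed_false (Ne.symm hxy) hyz h1.symm h2).elim
  · rcases h2 with h2 | h2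
    · rcases eq_or_ne x y with rfl | hxy
      · exact Or.inl h2
      · rcases eq_or_ne y z with rfl | hyz
        · exact Or.inr h1
        · exact (mixed_false hyz (Ne.symm hxy) h2 h1.symm).elim
    · exact Or.inr (h1.trans h2)

def simSetoid (G : SimpleGraph V) : Setoid V :=
  ⟨simRel G, ⟨fun _ => Or.inl rfl, fun h => h.imp Eq.symm Eq.symm, simRel_trans⟩⟩

end AnosovAux

namespace AnosovAux2
open AnosovAux

variable {V : Type*} {G : SimpleGraph V}

local notation "Qt" => Quotient (simSetoid G)
local notation "mkq" => Quotient.mk (simSetoid G)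

lemma sim_of_mk_eq {x y : V} (h : mkq x = mkq y) : simRel G x y := Quotient.exact h

lemma mk_eq_of_sim {x y : V} (h : simRel G x y) : mkq x = mkq y := Quotient.sound h

/-- clique type propagates within a class -/
lemma clique_propagate {a b c d : V} (hab : simRel G a b) (hadj : G.Adj a b)
    (hac : simRel G a c) (had : simRel G a d) (hcd : c ≠ d) : G.Adj c d := by
  have hclosed : ∀ e : V, simRel G a e → e ≠ a →
      insert a (G.neighborSet a) = insert e (G.neighborSet e) := by
    intro e he hea
    rcases he with he | he
    · exact absurd he (fun h => mixed_false (Ne.symm hea) hadj.ne h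
        ((hab.resolve_left (fun ho => open_nonadj ho hadj))))
    · exact he
  rcases eq_or_ne c a with rfl | hca
  · exact closed_adj (hclosed d had (Ne.symm hcd)) hcd
  · rcases eq_or_ne d a with rfl | hda
    · exact (closed_adj (hclosed c hac hca) (Ne.symm hcd)).symm
    · exact closed_adj ((hclosed c hac hca).symm.trans (hclosed d had hda)) hcd

def cliqueFlag (G : SimpleGraph V) (q : Quotient (simSetoid G)) : Prop :=
  ∃ a b : V, Quotient.mk (simSetoid G) a = q ∧ Quotient.mk (simSetoid G) b = q ∧ G.Adj a b

lemma sameclass_adj {x y : V} (h : mkq x = mkq y) (hne : x ≠ y) :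
    G.Adj x y ↔ cliqueFlag G (mkq x) := by
  constructor
  · intro hadj
    exact ⟨x, y, rfl, h.symm, hadj⟩
  · rintro ⟨a, b, ha, hb, hadj⟩
    have hab : simRel G a b := sim_of_mk_eq (ha.trans hb.symm)
    exact clique_propagate hab hadj (sim_of_mk_eq ha) (sim_of_mk_eq (ha.trans h)) hne

lemma betweenSim {x x' y : V} (hsim : simRel G x x') (hnsim : ¬ simRel G x y) :
    G.Adj x y ↔ G.Adj x' y := by
  have hyx : y ≠ x := fun h => hnsim (h ▸ Or.inl rfl)
  have hyx' : y ≠ x' := fun h => hnsim (h ▸ hsim)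
  rcases hsim with h | h
  · constructor
    · intro ha; have : y ∈ G.neighborSet x := ha; rw [h] at this; exact this
    · intro ha; have : y ∈ G.neighborSet x' := ha; rw [← h] at this; exact this
  · constructor
    · intro ha
      have : y ∈ insert x (G.neighborSet x) := Set.mem_insert_iff.2 (Or.inr ha)
      rw [h] at this
      rcases this with hh | hh
      · exact absurd hh hyx'
      · exact hh
    · intro ha
      have : y ∈ insert x' (G.neighborSet x') := Set.mem_insert_iff.2 (Or.inr ha)
      rw [← h] at this
      rcases this with hh | hh
      · exact absurd hh hyx
      · exact hh

open Classical in
noncomputable def AQ (G : SimpleGraph V) (q r : Quotient (simSetoid G)) : Fin 2 :=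
  if q = r then (if cliqueFlag G q then 1 else 0)
  else (if G.Adj q.out r.out then 1 else 0)

lemma sim_symm {x y : V} (h : simRel G x y) : simRel G y x := h.imp Eq.symm Eq.symm

lemma crossclass_adj {x y : V} (h : mkq x ≠ mkq y) :
    G.Adj x y ↔ G.Adj (mkq x).out (mkq y).out := by
  have hx : simRel G x ((mkq x).out) := sim_symm (sim_of_mk_eq (Quotient.out_eq (mkq x)))
  have hy : simRel G y ((mkq y).out) := sim_symm (sim_of_mk_eq (Quotient.out_eq (mkq y)))
  have hnxy : ¬ simRel G x y := fun hs => h (mk_eq_of_sim hs)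
  have h1 : G.Adj x y ↔ G.Adj ((mkq x).out) y := betweenSim hx hnxy
  have hn2 : ¬ simRel G y ((mkq x).out) := by
    intro hs
    exact h (mk_eq_of_sim (simRel_trans hx (sim_symm hs)))
  rw [h1, SimpleGraph.adj_comm, betweenSim hy hn2, SimpleGraph.adj_comm]

lemma adj_iff_AQ {x y : V} (hne : x ≠ y) :
    G.Adj x y ↔ AQ G (mkq x) (mkq y) = 1 := by
  classical
  unfold AQ
  rcases eq_or_ne (mkq x) (mkq y) with h | h
  · rw [if_pos h, sameclass_adj h hne]
    split <;> simp_all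
  · rw [if_neg h, crossclass_adj h]
    split <;> simp_all

lemma AQ_symm (q r : Quotient (simSetoid G)) : AQ G q r = AQ G r q := by
  classical
  unfold AQ
  rcases eq_or_ne q r with rfl | h
  · rfl
  · rw [if_neg h, if_neg (Ne.symm h), SimpleGraph.adj_comm]

lemma AQ_rows {q r : Quotient (simSetoid G)} (h : ∀ u, AQ G q u = AQ G r u) : q = r := by
  classical
  by_contra hqr
  set x := q.out with hxdef
  set y := r.out with hydef
  have hqx : mkq x = q := Quotient.out_eq q
  have hry : mkq y = r := Quotient.out_eq r
  have hxy : x ≠ y := fun hh => hqr (hqx.symm.trans (hh ▸ hry))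
  have claim : ∀ z : V, z ≠ x → z ≠ y → (G.Adj x z ↔ G.Adj y z) := by
    intro z hzx hzy
    rw [adj_iff_AQ (Ne.symm hzx), adj_iff_AQ (Ne.symm hzy), hqx, hry, h]
  rcases Classical.em (G.Adj x y) with hadj | hadj
  · apply hqr
    rw [← hqx, ← hry]
    apply mk_eq_of_sim
    refine Or.inr (Set.ext fun z => ?_)
    simp only [Set.mem_insert_iff, SimpleGraph.mem_neighborSet]
    rcases eq_or_ne z x with rfl | hzx
    · simp [hxy, hadj.symm]
    · rcases eq_or_ne z y with rfl | hzy
      · simp [hadj]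
      · simp [hzx, hzy, claim z hzx hzy]
  · apply hqr
    rw [← hqx, ← hry]
    apply mk_eq_of_sim
    refine Or.inl (Set.ext fun z => ?_)
    simp only [SimpleGraph.mem_neighborSet]
    rcases eq_or_ne z x with rfl | hzx
    · simp [G.irrefl]
      exact fun hh => hadj hh.symm
    · rcases eq_or_ne z y with rfl | hzy
      · simp [G.irrefl, hadj]
      · exact claim z hzx hzy

end AnosovAux2

namespace AnosovAux3
open AnosovAux AnosovAux2

variable {V : Type*} [Fintype V] {G : SimpleGraph V}

noncomputable instance fintypeQt (G : SimpleGraph V) : Fintype (Quotient (simSetoid G)) :=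
  Fintype.ofFinite _

local notation "mkq" => Quotient.mk (simSetoid G)

noncomputable def clsSize (G : SimpleGraph V) (q : Quotient (simSetoid G)) : ℕ :=
  Nat.card {x : V // Quotient.mk (simSetoid G) x = q}

lemma clsSize_eq_ncard (x : V) : clsSize G (mkq x) = {y | simRel G x y}.ncard := by
  rw [clsSize, ← Nat.card_coe_set_eq]
  exact Nat.card_congr (Equiv.subtypeEquivRight fun y =>
    ⟨fun h => sim_symm (sim_of_mk_eq h), fun h => mk_eq_of_sim (sim_symm h)⟩)

lemma clsSize_sum : ∑ q : Quotient (simSetoid G), clsSize G q = Fintype.card V := by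
  classical
  have e := Equiv.sigmaFiberEquiv (fun x : V => mkq x)
  have h := Fintype.card_congr e
  rw [Fintype.card_sigma] at h
  rw [← h]
  refine Finset.sum_congr rfl fun q _ => ?_
  rw [clsSize, Nat.card_eq_fintype_card]

/-- the matrix on `Fin T` induced by an equivalence with the class quotient. -/
noncomputable def AQmat (G : SimpleGraph V) {T : ℕ}
    (e : Fin T ≃ Quotient (simSetoid G)) : SymDistinctMat T := by
  refine ⟨fun i j => AQ G (e i) (e j), ?_, ?_⟩
  · ext i j
    exact congrArg Fin.val (AQ_symm (e j) (e i))
  · intro i j hij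
    by_contra hcon
    push_neg at hcon
    have : ∀ u, AQ G (e i) u = AQ G (e j) u := by
      intro u
      have := hcon (e.symm u)
      simpa using this
    exact hij (e.injective (AQ_rows this))

/-- Reconstruction: equal size functions and equal class matrices give isomorphic graphs. -/
lemma recon {W : Type*} [Fintype W] {H : SimpleGraph W} {T : ℕ}
    (eG : Fin T ≃ Quotient (simSetoid G)) (eH : Fin T ≃ Quotient (simSetoid H))
    (hs : ∀ i, clsSize G (eG i) = clsSize H (eH i))
    (hA : ∀ i j, AQ G (eG i) (eG j) = AQ H (eH i) (eH j)) :
    Nonempty (G ≃g H) := by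
  classical
  set f : V → Fin T := fun x => eG.symm (Quotient.mk (simSetoid G) x) with hf
  set g : W → Fin T := fun y => eH.symm (Quotient.mk (simSetoid H) y) with hg
  have fibcard : ∀ i : Fin T,
      Fintype.card {x : V // f x = i} = Fintype.card {y : W // g y = i} := by
    intro i
    have h1 : Nat.card {x : V // f x = i} = clsSize G (eG i) := by
      rw [clsSize]
      exact Nat.card_congr (Equiv.subtypeEquivRight fun x => by
        simp [hf, Equiv.symm_apply_eq])
    have h2 : Nat.card {y : W // g y = i} = clsSize H (eH i) := by
      rw [clsSize]
      exact Nat.card_congr (Equiv.subtypeEquivRight fun y => by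
        simp [hg, Equiv.symm_apply_eq])
    have := (h1.trans (hs i)).trans h2.symm
    simpa [Nat.card_eq_fintype_card] using this
  have fib : ∀ i : Fin T, {x : V // f x = i} ≃ {y : W // g y = i} :=
    fun i => Fintype.equivOfCardEq (fibcard i)
  set φ : V ≃ W := Equiv.ofFiberEquiv fib with hφdef
  have hφ : ∀ x : V, g (φ x) = f x := fun x => Equiv.ofFiberEquiv_map fib x
  have hmk : ∀ x : V, Quotient.mk (simSetoid H) (φ x) =
      eH (eG.symm (Quotient.mk (simSetoid G) x)) := by
    intro x
    have := hφ x
    rw [hg, hf] at this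
    have := congrArg eH this
    simpa using this
  refine ⟨⟨φ, ?_⟩⟩
  intro x y
  rcases eq_or_ne x y with rfl | hne
  · simp [G.irrefl, H.irrefl]
  · have hφne : φ x ≠ φ y := fun h => hne (φ.injective h)
    rw [adj_iff_AQ hne, adj_iff_AQ hφne, hmk x, hmk y,
      ← hA (eG.symm (Quotient.mk (simSetoid G) x)) (eG.symm (Quotient.mk (simSetoid G) y))]
    simp

end AnosovAux3



namespace AnosovAux4

open MulAction Finset

lemma count_map_fiber {T : ℕ} (s : Fin T → ℕ) (v : ℕ) :
    Multiset.count v (Finset.univ.val.map s) = Fintype.card {a // s a = v} := by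
  classical
  rw [Multiset.count_map, Fintype.card_subtype, Finset.card_def, Finset.filter_val]
  congr 1
  exact Multiset.filter_congr (fun x _ => by constructor <;> exact Eq.symm)

lemma mem_orbit_iff_multiset {T : ℕ} (s₀ s : Fin T → ℕ) :
    s ∈ MulAction.orbit (Equiv.Perm (Fin T))ᵈᵐᵃ s₀ ↔
      Finset.univ.val.map s = Finset.univ.val.map s₀ := by
  classical
  rw [MulAction.mem_orbit_iff]
  constructor
  · rintro ⟨g, rfl⟩
    obtain ⟨σ, rfl⟩ := DomMulAct.mk.surjective g
    have hsmul : (DomMulAct.mk σ • s₀) = fun a => s₀ (σ a) := rfl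
    rw [hsmul]
    have huniv : Finset.univ.val.map σ = Finset.univ.val := by
      have := congrArg Finset.val (Finset.map_univ_equiv σ)
      rw [Finset.map_val] at this
      simpa using this
    calc Finset.univ.val.map (fun a => s₀ (σ a))
        = (Finset.univ.val.map σ).map s₀ := by
          rw [Multiset.map_map]; rfl
      _ = Finset.univ.val.map s₀ := by rw [huniv]
  · intro h
    have hfib2 : ∀ v : ℕ, Fintype.card {a // s a = v} = Fintype.card {a // s₀ a = v} := by
      intro v
      rw [← count_map_fiber, ← count_map_fiber, h]
    let fe : ∀ v : ℕ, {a // s a = v} ≃ {a // s₀ a = v} := fun v => Fintype.equivOfCardEq (hfib2 v)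
    refine ⟨DomMulAct.mk (Equiv.ofFiberEquiv fe), funext fun a => ?_⟩
    exact Equiv.ofFiberEquiv_map fe a

lemma card_perm_list (l : List ℕ) (hpos : ∀ i ∈ (l : Multiset ℕ), 0 < i) :
    Nat.card {s : Fin l.length → ℕ // Finset.univ.val.map s = (l : Multiset ℕ)} *
      ∏ i ∈ Finset.Icc 1 (l : Multiset ℕ).sup, ((l : Multiset ℕ).count i).factorial
      = (l.length).factorial := by
  classical
  set n := l.length with hn
  set s₀ : Fin n → ℕ := l.get with hs₀
  have h₀ : Finset.univ.val.map s₀ = (l : Multiset ℕ) := by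
    rw [Fin.univ_val_map]
    exact congrArg _ (List.ofFn_get l)
  haveI : Finite ((Equiv.Perm (Fin n))ᵈᵐᵃ) :=
    Finite.of_equiv (Equiv.Perm (Fin n)) DomMulAct.mk
  haveI : Fintype ((Equiv.Perm (Fin n))ᵈᵐᵃ) := Fintype.ofFinite _
  have horbfin : (MulAction.orbit (Equiv.Perm (Fin n))ᵈᵐᵃ s₀).Finite := Set.finite_range _
  haveI : Fintype (MulAction.orbit (Equiv.Perm (Fin n))ᵈᵐᵃ s₀) := horbfin.fintype
  have hos := MulAction.card_orbit_mul_card_stabilizer_eq_card_group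
    ((Equiv.Perm (Fin n))ᵈᵐᵃ) s₀
  -- identify the orbit cardinality
  have horb : Fintype.card (MulAction.orbit (Equiv.Perm (Fin n))ᵈᵐᵃ s₀) =
      Nat.card {s : Fin n → ℕ // Finset.univ.val.map s = (l : Multiset ℕ)} := by
    rw [← Nat.card_eq_fintype_card]
    refine Nat.card_congr (Equiv.subtypeEquivRight fun s => ?_)
    rw [mem_orbit_iff_multiset, h₀]
  -- identify the stabilizer cardinality
  have hstabeq : Fintype.card (MulAction.stabilizer (Equiv.Perm (Fin n))ᵈᵐᵃ s₀) =
      Fintype.card {σ : Equiv.Perm (Fin n) // s₀ ∘ σ = s₀} := by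
    rw [← Nat.card_eq_fintype_card, ← Nat.card_eq_fintype_card]
    refine Nat.card_congr (Equiv.symm (DomMulAct.mk.subtypeEquiv fun σ => ?_))
    rw [MulAction.mem_stabilizer_iff]
    exact Iff.rfl
  have hstab : Fintype.card (MulAction.stabilizer (Equiv.Perm (Fin n))ᵈᵐᵃ s₀) =
      ∏ i ∈ Finset.Icc 1 (l : Multiset ℕ).sup, ((l : Multiset ℕ).count i).factorial := by
    rw [hstabeq, DomMulAct.stabilizer_card']
    have h1 : ∏ i ∈ Finset.univ.image s₀, (Fintype.card {a // s₀ a = i}).factorial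
        = ∏ i ∈ Finset.univ.image s₀, ((l : Multiset ℕ).count i).factorial :=
      Finset.prod_congr rfl fun i _ => by rw [← h₀, count_map_fiber]
    rw [h1]
    refine Finset.prod_subset ?_ ?_
    · intro v hv
      obtain ⟨a, _, rfl⟩ := Finset.mem_image.1 hv
      have hmem : s₀ a ∈ (l : Multiset ℕ) := by
        rw [← h₀]
        exact Multiset.mem_map.2 ⟨a, Finset.mem_val.mpr (Finset.mem_univ a), rfl⟩
      exact Finset.mem_Icc.2 ⟨hpos _ hmem, Multiset.le_sup hmem⟩
    · intro i _ hni
      have : (l : Multiset ℕ).count i = 0 := by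
        rw [← h₀]
        rw [Multiset.count_eq_zero]
        intro hmem
        obtain ⟨a, _, rfl⟩ := Multiset.mem_map.1 hmem
        exact hni (Finset.mem_image.2 ⟨a, Finset.mem_univ a, rfl⟩)
      rw [this, Nat.factorial_zero]
  have hgrp : Fintype.card ((Equiv.Perm (Fin n))ᵈᵐᵃ) = n.factorial := by
    rw [Fintype.card_congr DomMulAct.mk.symm, Fintype.card_perm, Fintype.card_fin]
  rw [horb, hstab, hgrp] at hos
  exact hos

lemma card_perm_multiset {T : ℕ} (m : Multiset ℕ) (hT : Multiset.card m = T)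
    (hpos : ∀ i ∈ m, 0 < i) :
    Nat.card {s : Fin T → ℕ // Finset.univ.val.map s = m} *
      ∏ i ∈ Finset.Icc 1 m.sup, (m.count i).factorial = T.factorial := by
  subst hT
  induction m using Quotient.inductionOn with
  | h l =>
    exact card_perm_list l (by simpa using hpos)

end AnosovAux4

namespace AnosovAux5
open AnosovAux AnosovAux2 AnosovAux3 AnosovAux4

variable {n : ℕ}

instance finiteSymDistinctMat (t : ℕ) : Finite (SymDistinctMat t) := by
  unfold SymDistinctMat
  infer_instance

instance finiteQuotMat (t : ℕ) : Finite (Quotient (matPermSetoid t)) := Quotient.finite _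

lemma finiteS {T : ℕ} (m : Multiset ℕ) :
    Finite {s : Fin T → ℕ // Finset.univ.val.map s = m} := by
  have hle : ∀ (s : {s : Fin T → ℕ // Finset.univ.val.map s = m}) (i : Fin T),
      s.1 i ≤ m.sup := by
    rintro ⟨f, hf⟩ i
    subst hf
    exact Multiset.le_sup
      (Multiset.mem_map.2 ⟨i, Finset.mem_val.mpr (Finset.mem_univ i), rfl⟩)
  refine Finite.of_injective
    (fun s => (fun i => ⟨s.1 i, hle s i⟩ : Fin T → {k : ℕ // k ≤ m.sup})) ?_
  intro s s' h
  refine Subtype.ext (funext fun i => ?_)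
  exact congrArg Subtype.val (congrFun h i)

lemma nat_card_eq_sum_fibers {α : Type*} {β : Type*} [Finite α] [Fintype β] (f : α → β) :
    Nat.card α = ∑ b : β, Nat.card {a // f a = b} := by
  classical
  cases nonempty_fintype α
  rw [Nat.card_eq_fintype_card, ← Fintype.card_congr (Equiv.sigmaFiberEquiv f),
    Fintype.card_sigma]
  exact Finset.sum_congr rfl fun b _ => (Nat.card_eq_fintype_card).symm

variable {G : SimpleGraph (Fin n)}

lemma clsSize_two (h2 : ∀ x, 2 ≤ {y | simRel G x y}.ncard) (q : Quotient (simSetoid G)) :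
    2 ≤ clsSize G q := by
  rw [← Quotient.out_eq q, clsSize_eq_ncard]
  exact h2 _

noncomputable def partitionOfG (G : SimpleGraph (Fin n))
    (h2 : ∀ x, 2 ≤ {y | simRel G x y}.ncard) : Nat.Partition n where
  parts := Multiset.map (clsSize G) Finset.univ.val
  parts_pos := by
    intro i hi
    obtain ⟨q, _, rfl⟩ := Multiset.mem_map.1 hi
    exact lt_of_lt_of_le (by norm_num) (clsSize_two h2 q)
  parts_sum := by
    have h : (Multiset.map (clsSize G) Finset.univ.val).sum
        = ∑ q : Quotient (simSetoid G), clsSize G q := rfl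
    rw [h, clsSize_sum, Fintype.card_fin]

lemma partitionOfG_card (h2 : ∀ x, 2 ≤ {y | simRel G x y}.ncard) :
    (partitionOfG G h2).parts.card = Fintype.card (Quotient (simSetoid G)) := by
  show (Multiset.map (clsSize G) Finset.univ.val).card = _
  rw [Multiset.card_map]
  exact Finset.card_univ

lemma partitionOfG_two (h2 : ∀ x, 2 ≤ {y | simRel G x y}.ncard) :
    ∀ i ∈ (partitionOfG G h2).parts, 2 ≤ i := by
  intro i hi
  obtain ⟨q, _, rfl⟩ := Multiset.mem_map.1 hi
  exact clsSize_two h2 q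

noncomputable def canonMatQ (G : SimpleGraph (Fin n)) {T : ℕ}
    (hT : Fintype.card (Quotient (simSetoid G)) = T) : Quotient (matPermSetoid T) :=
  Quotient.mk (matPermSetoid T) (AQmat G (Fintype.equivFinOfCardEq hT).symm)

lemma canonMatQ_spec (G : SimpleGraph (Fin n)) {T : ℕ}
    (hT : Fintype.card (Quotient (simSetoid G)) = T) :
    ∃ e : Fin T ≃ Quotient (simSetoid G),
      ∀ i j, ((canonMatQ G hT).out).1 i j = AQ G (e i) (e j) := by
  have hout : Quotient.mk (matPermSetoid T) ((canonMatQ G hT).out) = canonMatQ G hT :=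
    Quotient.out_eq _
  obtain ⟨σ, hσ⟩ : (matPermSetoid T).r ((canonMatQ G hT).out)
      (AQmat G (Fintype.equivFinOfCardEq hT).symm) := Quotient.exact hout
  refine ⟨(σ⁻¹ : Equiv.Perm (Fin T)).trans (Fintype.equivFinOfCardEq hT).symm,
    fun i j => ?_⟩
  have := hσ (σ⁻¹ i) (σ⁻¹ j)
  simp only [Equiv.Perm.inv_def, Equiv.apply_symm_apply] at this
  rw [← this]
  rfl

noncomputable def normE (G : SimpleGraph (Fin n)) {T : ℕ}
    (hT : Fintype.card (Quotient (simSetoid G)) = T) : Fin T ≃ Quotient (simSetoid G) :=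
  (canonMatQ_spec G hT).choose

lemma normE_spec (G : SimpleGraph (Fin n)) {T : ℕ}
    (hT : Fintype.card (Quotient (simSetoid G)) = T) :
    ∀ i j, ((canonMatQ G hT).out).1 i j = AQ G (normE G hT i) (normE G hT j) :=
  (canonMatQ_spec G hT).choose_spec

lemma invS_mem (G : SimpleGraph (Fin n)) (h2 : ∀ x, 2 ≤ {y | simRel G x y}.ncard) {T : ℕ}
    (hT : Fintype.card (Quotient (simSetoid G)) = T) :
    Finset.univ.val.map (fun i => clsSize G (normE G hT i)) = (partitionOfG G h2).parts := by
  show _ = Multiset.map (clsSize G) Finset.univ.val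
  have : Finset.univ.val.map (normE G hT) = Finset.univ.val := by
    have := congrArg Finset.val (Finset.map_univ_equiv (normE G hT))
    rw [Finset.map_val] at this
    simpa using this
  calc Finset.univ.val.map (fun i => clsSize G (normE G hT i))
      = (Finset.univ.val.map (normE G hT)).map (clsSize G) := by
        rw [Multiset.map_map]; rfl
    _ = Multiset.map (clsSize G) Finset.univ.val := by rw [this]

end AnosovAux5

namespace AnosovAux6
open AnosovAux AnosovAux2 AnosovAux3 AnosovAux4 AnosovAux5

variable (n : ℕ)

noncomputable def partOf (c : Quotient (graphClassSetoid n IsAnosov)) : Nat.Partition n :=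
  partitionOfG (Quotient.out c).1 (fun x => (Quotient.out c).2.2.1 x)

lemma fiber_le (p : Nat.Partition n) (hp2 : ∀ i ∈ p.parts, 2 ≤ i) :
    Nat.card {c : Quotient (graphClassSetoid n IsAnosov) // partOf n c = p} ≤
      (Nat.factorial (Multiset.card p.parts) /
        ∏ i ∈ Finset.Icc 1 p.parts.sup, Nat.factorial (Multiset.count i p.parts)) *
      symDistinctCount (Multiset.card p.parts) := by
  classical
  set T := Multiset.card p.parts with hTdef
  have hT : ∀ c : {c : Quotient (graphClassSetoid n IsAnosov) // partOf n c = p},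
      Fintype.card (Quotient (simSetoid (Quotient.out c.1).1)) = T := by
    intro c
    have h1 := congrArg (fun q : Nat.Partition n => Multiset.card q.parts) c.2
    rw [hTdef, ← h1]
    exact (partitionOfG_card _).symm
  set F : {c : Quotient (graphClassSetoid n IsAnosov) // partOf n c = p} →
      {s : Fin T → ℕ // Finset.univ.val.map s = p.parts} × Quotient (matPermSetoid T) :=
    fun c =>
      (⟨fun i => clsSize (Quotient.out c.1).1 (normE (Quotient.out c.1).1 (hT c) i), by
        rw [invS_mem (Quotient.out c.1).1 (fun x => (Quotient.out c.1).2.2.1 x) (hT c)]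
        exact congrArg Nat.Partition.parts c.2⟩,
      canonMatQ (Quotient.out c.1).1 (hT c)) with hF
  have hFinj : Function.Injective F := by
    intro c c' heq
    rw [hF] at heq
    have h1 := congrArg Prod.fst heq
    have h2 := congrArg Prod.snd heq
    simp only at h1 h2
    have hs : ∀ i, clsSize (Quotient.out c.1).1 (normE (Quotient.out c.1).1 (hT c) i) =
        clsSize (Quotient.out c'.1).1 (normE (Quotient.out c'.1).1 (hT c') i) :=
      fun i => congrFun (congrArg Subtype.val h1) i
    have hA : ∀ i j, AQ (Quotient.out c.1).1 (normE (Quotient.out c.1).1 (hT c) i)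
        (normE (Quotient.out c.1).1 (hT c) j) =
        AQ (Quotient.out c'.1).1 (normE (Quotient.out c'.1).1 (hT c') i)
        (normE (Quotient.out c'.1).1 (hT c') j) := by
      intro i j
      rw [← normE_spec (Quotient.out c.1).1 (hT c) i j,
        ← normE_spec (Quotient.out c'.1).1 (hT c') i j, h2]
    obtain ⟨iso⟩ := recon (normE (Quotient.out c.1).1 (hT c))
      (normE (Quotient.out c'.1).1 (hT c')) hs hA
    have hr : (graphClassSetoid n IsAnosov).r (Quotient.out c.1) (Quotient.out c'.1) := ⟨iso⟩
    have hcc : c.1 = c'.1 := by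
      rw [← Quotient.out_eq c.1, ← Quotient.out_eq c'.1]
      exact Quotient.sound hr
    exact Subtype.ext hcc
  haveI : Finite {s : Fin T → ℕ // Finset.univ.val.map s = p.parts} := finiteS p.parts
  have hle := Nat.card_le_card_of_injective F hFinj
  rw [Nat.card_prod] at hle
  have hmul := card_perm_multiset p.parts rfl
    (fun i hi => lt_of_lt_of_le (by norm_num) (hp2 i hi))
  have hppos : 0 < ∏ i ∈ Finset.Icc 1 p.parts.sup, Nat.factorial (Multiset.count i p.parts) :=
    Finset.prod_pos fun i _ => Nat.factorial_pos _
  have hScard : Nat.factorial T /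
      (∏ i ∈ Finset.Icc 1 p.parts.sup, Nat.factorial (Multiset.count i p.parts)) =
      Nat.card {s : Fin T → ℕ // Finset.univ.val.map s = p.parts} :=
    Nat.div_eq_of_eq_mul_left hppos hmul.symm
  rw [← hScard] at hle
  exact hle

theorem main_le :
    anosovCount n ≤
      ∑ p ∈ Finset.univ.filter (fun p : Nat.Partition n => ∀ i ∈ p.parts, 2 ≤ i),
        (Nat.factorial p.parts.card /
            ∏ i ∈ Finset.Icc 1 p.parts.sup, Nat.factorial (p.parts.count i)) *
          symDistinctCount p.parts.card := by
  classical
  rw [anosovCount]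
  haveI : Finite (Quotient (graphClassSetoid n IsAnosov)) := Quotient.finite _
  rw [nat_card_eq_sum_fibers (partOf n)]
  have hvanish : ∀ p ∈ (Finset.univ : Finset (Nat.Partition n)),
      p ∉ Finset.univ.filter (fun p : Nat.Partition n => ∀ i ∈ p.parts, 2 ≤ i) →
      Nat.card {c : Quotient (graphClassSetoid n IsAnosov) // partOf n c = p} = 0 := by
    intro p _ hp
    haveI : IsEmpty {c : Quotient (graphClassSetoid n IsAnosov) // partOf n c = p} := by
      refine ⟨fun c => hp ?_⟩
      rw [Finset.mem_filter]
      refine ⟨Finset.mem_univ _, ?_⟩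
      rw [← c.2]
      exact partitionOfG_two _
    exact Nat.card_of_isEmpty
  rw [← Finset.sum_subset (Finset.filter_subset _ Finset.univ) hvanish]
  exact Finset.sum_le_sum fun p hp => fiber_le n p (Finset.mem_filter.1 hp).2

end AnosovAux6


/-- `a(n) ≤ ∑_{λ ∈ Λ₂(n)} (ℓ(λ)!/∏_{i=1}^{λ₁} k(λ,i)!) · X(ℓ(λ))`. -/
theorem anosovCount_le_sum (n : ℕ) :
    anosovCount n ≤
      ∑ p ∈ Finset.univ.filter (fun p : Nat.Partition n => ∀ i ∈ p.parts, 2 ≤ i),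
        (Nat.factorial p.parts.card /
            ∏ i ∈ Finset.Icc 1 p.parts.sup, Nat.factorial (p.parts.count i)) *
          symDistinctCount p.parts.card := by
  exact AnosovAux6.main_le n
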